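/- Suppose U: ℝ³ → [0,∞) satisfies lim_{|x|→∞} ‖(|x⊥|^α,|x₃|^γ)‖_{2/β}·U(x) = g > 0 with α > 2, β > 0, γ > 0. Then for every ε ∈ (0,1) there exists T such that for all t ≥ T and all y with |y| ≥ (1-ε): t·U(t^{1/α}y⊥, t^{1/γ}y₃) ≤ (1+ε)·u(y), where u(y) = g·(|y⊥|^{2α/β} + |y₃|^{2γ/β})^{-β/2}. -/

import Mathlib

open MeasureTheory Real Filter

/-- The `2/β`-pseudo-norm of `(c₁, c₂) ∈ ℝ²`. -/
noncomputable def pnorm (β c₁ c₂ : ℝ) : ℝ := (|c₁| ^ (2 / β) + |c₂| ^ (2 / β)) ^ (β / 2)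

/-- The anisotropic scaling `x ↦ (t^{1/α} x⊥, t^{1/γ} x₃)` on `ℝ³`. -/
noncomputable def scaleMap (α γ t : ℝ) (x : EuclideanSpace ℝ (Fin 3)) :
    EuclideanSpace ℝ (Fin 3) :=
  WithLp.toLp 2 ![t ^ (1 / α) * x 0, t ^ (1 / α) * x 1, t ^ (1 / γ) * x 2]

/-- The anisotropic model potential `u(x) = g (|x⊥|^{2α/β} + |x₃|^{2γ/β})^{-β/2}`. -/
noncomputable def uFun (g α β γ : ℝ) (x : EuclideanSpace ℝ (Fin 3)) : ℝ :=
  g * (Real.sqrt ((x 0) ^ 2 + (x 1) ^ 2) ^ (2 * α / β) + |x 2| ^ (2 * γ / β)) ^ (-(β / 2))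

lemma pnorm_smul (β : ℝ) (hβ : 0 < β) (t a b : ℝ) (ht : 0 ≤ t) :
    pnorm β (t * a) (t * b) = t * pnorm β a b := by
  unfold pnorm
  rw [abs_mul, abs_mul, abs_of_nonneg ht,
    Real.mul_rpow ht (abs_nonneg a), Real.mul_rpow ht (abs_nonneg b), ← mul_add,
    Real.mul_rpow (Real.rpow_nonneg ht _) (by positivity),
    ← Real.rpow_mul ht]
  have : 2 / β * (β / 2) = 1 := by field_simp
  rw [this, Real.rpow_one]

lemma pnorm_pos (β a b : ℝ) (hβ : 0 < β) (ha : 0 ≤ a) (hb : 0 ≤ b) (hab : 0 < a + b) :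
    0 < pnorm β a b := by
  unfold pnorm
  have h : 0 < |a| ^ (2/β) + |b| ^ (2/β) := by
    rcases lt_or_ge 0 a with h1 | h1
    · have : 0 < |a| ^ (2/β) := Real.rpow_pos_of_pos (abs_pos.2 h1.ne') _
      have := Real.rpow_nonneg (abs_nonneg b) (2/β)
      linarith
    · have hb' : 0 < b := by linarith
      have : 0 < |b| ^ (2/β) := Real.rpow_pos_of_pos (abs_pos.2 hb'.ne') _
      have := Real.rpow_nonneg (abs_nonneg a) (2/β)
      linarith
  exact Real.rpow_pos_of_pos h _

set_option maxHeartbeats 1000000 in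
/-- Uniform upper bound `t U(t^{1/α}y⊥, t^{1/γ}y₃) ≤ (1+ε) u(y)` for large `t` and
`|y| ≥ 1 - ε`. -/
theorem scaled_potential_uniform_bound (U : EuclideanSpace ℝ (Fin 3) → ℝ)
    (hU0 : ∀ x, 0 ≤ U x) (g α β γ : ℝ) (hg : 0 < g) (hα : 2 < α) (hβ : 0 < β) (hγ : 0 < γ)
    (hlim : Tendsto
      (fun x : EuclideanSpace ℝ (Fin 3) =>
        pnorm β (Real.sqrt ((x 0) ^ 2 + (x 1) ^ 2) ^ α) (|x 2| ^ γ) * U x)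
      (cocompact (EuclideanSpace ℝ (Fin 3))) (nhds g)) :
    ∀ ε : ℝ, 0 < ε → ε < 1 → ∃ T : ℝ, ∀ t : ℝ, T ≤ t →
      ∀ y : EuclideanSpace ℝ (Fin 3), 1 - ε ≤ ‖y‖ →
        t * U (scaleMap α γ t y) ≤ (1 + ε) * uFun g α β γ y := by
  intro ε hε hε1
  have hα0 : 0 < α := by linarith
  -- extract R from the limit
  have hev : ∀ᶠ x in cocompact (EuclideanSpace ℝ (Fin 3)),
      pnorm β (Real.sqrt ((x 0) ^ 2 + (x 1) ^ 2) ^ α) (|x 2| ^ γ) * U x < g + ε * g := by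
    exact hlim.eventually_lt_const (by nlinarith [mul_pos hε hg])
  rw [← Metric.cobounded_eq_cocompact] at hev
  obtain ⟨R, -, hR⟩ := (Filter.hasBasis_cobounded_norm (E := EuclideanSpace ℝ (Fin 3))).eventually_iff.1 hev
  set m : ℝ := min (1/α) (1/γ) with hm
  have hm0 : 0 < m := lt_min (by positivity) (by positivity)
  set T : ℝ := max 1 ((max R 0 / (1 - ε)) ^ (1/m)) with hT
  refine ⟨T, fun t ht y hy => ?_⟩
  have ht1 : (1:ℝ) ≤ t := le_trans (le_max_left _ _) ht
  have ht0 : (0:ℝ) < t := by linarith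
  -- scaled point
  set x := scaleMap α γ t y with hx
  have hx0 : x 0 = t ^ (1/α) * y 0 := rfl
  have hx1 : x 1 = t ^ (1/α) * y 1 := rfl
  have hx2 : x 2 = t ^ (1/γ) * y 2 := rfl
  have hta : (0:ℝ) ≤ t ^ (1/α) := Real.rpow_nonneg ht0.le _
  have htg : (0:ℝ) ≤ t ^ (1/γ) := Real.rpow_nonneg ht0.le _
  set r : ℝ := Real.sqrt ((y 0) ^ 2 + (y 1) ^ 2) with hr
  have hr0 : 0 ≤ r := Real.sqrt_nonneg _
  -- perpendicular norm of x
  have hperp : Real.sqrt ((x 0) ^ 2 + (x 1) ^ 2) = t ^ (1/α) * r := by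
    rw [hx0, hx1, mul_pow, mul_pow, ← mul_add, Real.sqrt_mul (sq_nonneg _),
      Real.sqrt_sq hta]
  have habs : |x 2| = t ^ (1/γ) * |y 2| := by
    rw [hx2, abs_mul, abs_of_nonneg htg]
  -- pnorm scaling
  have hpa : (t ^ (1/α) * r) ^ α = t * r ^ α := by
    rw [Real.mul_rpow hta hr0, ← Real.rpow_mul ht0.le, one_div,
      inv_mul_cancel₀ hα0.ne', Real.rpow_one]
  have hpg : (t ^ (1/γ) * |y 2|) ^ γ = t * |y 2| ^ γ := by
    rw [Real.mul_rpow htg (abs_nonneg _), ← Real.rpow_mul ht0.le]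
    rw [one_div, inv_mul_cancel₀ hγ.ne', Real.rpow_one]
  set P : ℝ := pnorm β (r ^ α) (|y 2| ^ γ) with hP
  have hPscale : pnorm β (Real.sqrt ((x 0) ^ 2 + (x 1) ^ 2) ^ α) (|x 2| ^ γ) = t * P := by
    rw [hperp, habs, hpa, hpg, pnorm_smul β hβ t _ _ ht0.le]
  -- P > 0 since y ≠ 0
  have hy0 : 0 < ‖y‖ := lt_of_lt_of_le (by linarith) hy
  have hsum : 0 < r ^ α + |y 2| ^ γ := by
    have hypos : 0 < (y 0) ^ 2 + (y 1) ^ 2 + (y 2) ^ 2 := by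
      have h := hy0
      rw [EuclideanSpace.norm_eq] at h
      simp only [Fin.sum_univ_three, Real.norm_eq_abs, sq_abs] at h
      exact Real.sqrt_pos.mp h
    rcases lt_or_ge 0 ((y 0) ^ 2 + (y 1) ^ 2) with h1 | h1
    · have hrp : 0 < r := Real.sqrt_pos.2 h1
      have h2 := Real.rpow_pos_of_pos hrp α
      have h3 := Real.rpow_nonneg (abs_nonneg (y 2)) γ
      linarith
    · have h2 : 0 < (y 2) ^ 2 := by nlinarith [sq_nonneg (y 0), sq_nonneg (y 1)]
      have h3 : 0 < |y 2| := abs_pos.2 (by intro h; rw [h] at h2; simp at h2)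
      have h4 := Real.rpow_pos_of_pos h3 γ
      have h5 := Real.rpow_nonneg hr0 α
      linarith
  have hPpos : 0 < P :=
    pnorm_pos β _ _ hβ (Real.rpow_nonneg hr0 _) (Real.rpow_nonneg (abs_nonneg _) _) hsum
  -- uFun = g / P
  have huP : uFun g α β γ y = g / P := by
    unfold uFun
    rw [← hr, hP]
    unfold pnorm
    rw [abs_of_nonneg (Real.rpow_nonneg hr0 _), abs_of_nonneg (Real.rpow_nonneg (abs_nonneg _) _),
      ← Real.rpow_mul hr0, ← Real.rpow_mul (abs_nonneg _)]
    have e1 : α * (2/β) = 2 * α / β := by ring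
    have e2 : γ * (2/β) = 2 * γ / β := by ring
    rw [e1, e2, Real.rpow_neg (by positivity)]
    exact (div_eq_mul_inv g _).symm
  -- norm lower bound on x
  have htm : ∀ s : ℝ, m ≤ s → t ^ m ≤ t ^ s := fun s hs =>
    Real.rpow_le_rpow_of_exponent_le ht1 hs
  -- norm lower bound on x
  have hnx : t ^ m * ‖y‖ ≤ ‖x‖ := by
    have hny : ‖y‖ ^ 2 = (y 0) ^ 2 + (y 1) ^ 2 + (y 2) ^ 2 := by
      rw [EuclideanSpace.norm_eq, Real.sq_sqrt (by positivity)]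
      simp [Fin.sum_univ_three, sq_abs]
    have hnx2 : ‖x‖ ^ 2 = (x 0) ^ 2 + (x 1) ^ 2 + (x 2) ^ 2 := by
      rw [EuclideanSpace.norm_eq, Real.sq_sqrt (by positivity)]
      simp [Fin.sum_univ_three, sq_abs]
    have e1 : (t ^ m) ^ 2 = t ^ (2 * m) := by
      rw [show (2:ℝ) * m = m * 2 by ring, Real.rpow_mul ht0.le, Real.rpow_two]
    have e2 : (t ^ (1/α)) ^ 2 = t ^ (2 * (1/α)) := by
      rw [show (2:ℝ) * (1/α) = (1/α) * 2 by ring, Real.rpow_mul ht0.le, Real.rpow_two]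
    have e3 : (t ^ (1/γ)) ^ 2 = t ^ (2 * (1/γ)) := by
      rw [show (2:ℝ) * (1/γ) = (1/γ) * 2 by ring, Real.rpow_mul ht0.le, Real.rpow_two]
    have h1 : t ^ (2 * m) ≤ t ^ (2 * (1/α)) :=
      Real.rpow_le_rpow_of_exponent_le ht1 (by nlinarith [min_le_left (1/α) (1/γ)])
    have h2 : t ^ (2 * m) ≤ t ^ (2 * (1/γ)) :=
      Real.rpow_le_rpow_of_exponent_le ht1 (by nlinarith [min_le_right (1/α) (1/γ)])
    have h1' : (t ^ m) ^ 2 ≤ (t ^ (1/α)) ^ 2 := by rw [e1, e2]; exact h1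
    have h2' : (t ^ m) ^ 2 ≤ (t ^ (1/γ)) ^ 2 := by rw [e1, e3]; exact h2
    have key : (t ^ m * ‖y‖) ^ 2 ≤ ‖x‖ ^ 2 := by
      rw [hnx2, hx0, hx1, hx2]
      calc (t ^ m * ‖y‖) ^ 2
          = (t ^ m) ^ 2 * ((y 0) ^ 2 + (y 1) ^ 2 + (y 2) ^ 2) := by rw [mul_pow, hny]
        _ ≤ (t ^ (1/α)) ^ 2 * (y 0) ^ 2 + (t ^ (1/α)) ^ 2 * (y 1) ^ 2
            + (t ^ (1/γ)) ^ 2 * (y 2) ^ 2 := by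
            have g1 := mul_le_mul_of_nonneg_right h1' (sq_nonneg (y 0))
            have g2 := mul_le_mul_of_nonneg_right h1' (sq_nonneg (y 1))
            have g3 := mul_le_mul_of_nonneg_right h2' (sq_nonneg (y 2))
            linarith
        _ = (t ^ (1/α) * y 0) ^ 2 + (t ^ (1/α) * y 1) ^ 2 + (t ^ (1/γ) * y 2) ^ 2 := by ring
    have h0 : 0 ≤ t ^ m * ‖y‖ := mul_nonneg (Real.rpow_nonneg ht0.le _) (norm_nonneg y)
    calc t ^ m * ‖y‖ = Real.sqrt ((t ^ m * ‖y‖) ^ 2) := (Real.sqrt_sq h0).symm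
      _ ≤ Real.sqrt (‖x‖ ^ 2) := Real.sqrt_le_sqrt key
      _ = ‖x‖ := Real.sqrt_sq (norm_nonneg x)
  -- R ≤ ‖x‖
  have hRx : R ≤ ‖x‖ := by
    have hb0 : (0:ℝ) ≤ max R 0 / (1 - ε) := div_nonneg (le_max_right _ _) (by linarith)
    have hTm : max R 0 / (1 - ε) ≤ t ^ m := by
      have h1 : (max R 0 / (1 - ε)) ^ (1/m) ≤ t := le_trans (le_max_right _ _) ht
      have h2 : ((max R 0 / (1 - ε)) ^ (1/m)) ^ m ≤ t ^ m :=
        Real.rpow_le_rpow (Real.rpow_nonneg hb0 _) h1 hm0.le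
      rwa [← Real.rpow_mul hb0, one_div, inv_mul_cancel₀ hm0.ne', Real.rpow_one] at h2
    have htm0 : (0:ℝ) ≤ t ^ m := Real.rpow_nonneg ht0.le _
    have : max R 0 ≤ t ^ m * (1 - ε) := by
      rw [div_le_iff₀ (by linarith)] at hTm
      linarith
    calc R ≤ max R 0 := le_max_left _ _
      _ ≤ t ^ m * (1 - ε) := this
      _ ≤ t ^ m * ‖y‖ := mul_le_mul_of_nonneg_left hy htm0
      _ ≤ ‖x‖ := hnx
  have hbound := hR (Set.mem_setOf.mpr hRx)
  rw [hPscale] at hbound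
  rw [huP]
  rw [mul_div_assoc', le_div_iff₀ hPpos]
  have heq : t * U x * P = t * P * U x := by ring
  have hfin : (1 + ε) * g = g + ε * g := by ring
  linarith
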